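/- arXiv:1110.3557 — 4 statements merged into one kernel-verified Lean document; each statement's English description precedes it below -/
import Mathlib

section
/- Let {P₀, P₁, P₂} be a symmetric Clifford system (m = 2) on ℝ^{2l} and x ∈ M₊. Write ξ = P₀x and decompose P₁P₂x = U + V + W where U ∈ T₀(ξ), V ∈ T₁(ξ), W ∈ T₋₁(ξ) are the eigenspaces of the shape operator A_ξ for eigenvalues 0, 1, -1 respectively. Then |V| = |W|. -/
open Matrix

/-- Let `{P₀, P₁, P₂}` be a symmetric Clifford system (`m = 2`) on `ℝ^{2l}`
and `x ∈ M₊`.  With `ξ = P₀x`, decompose `P₁P₂x = U + V + W` where `U ∈ T₀(ξ)`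
(`U = Q P₀ x` with `Q` in the span of the system and `⟨Q, P₀⟩ = 0`),
`V ∈ T₁(ξ) = E₋ ∩ T_xM₊` and `W ∈ T₋₁(ξ) = E₊ ∩ T_xM₊`.  Then `|V| = |W|`. -/
theorem stmt_7 (l : ℕ) (P : Fin 3 → Matrix (Fin (2 * l)) (Fin (2 * l)) ℝ)
    (hsymm : ∀ i, (P i).IsSymm)
    (hcl : ∀ i j, P i * P j + P j * P i =
      if i = j then (2 : ℝ) • (1 : Matrix (Fin (2 * l)) (Fin (2 * l)) ℝ) else 0)
    (x : Fin (2 * l) → ℝ) (hx : x ⬝ᵥ x = 1) (hMx : ∀ i, (P i *ᵥ x) ⬝ᵥ x = 0)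
    (U V W : Fin (2 * l) → ℝ)
    -- U ∈ T₀(ξ): U = Q P₀ x with Q in the span of {P₀, P₁, P₂} and ⟨Q, P₀⟩ = 0
    (hU : ∃ Q ∈ Submodule.span ℝ (Set.range P),
      (Q * P 0).trace = 0 ∧ U = Q *ᵥ (P 0 *ᵥ x))
    -- V ∈ T₁(ξ) = E₋ ∩ T_x M₊
    (hV₁ : P 0 *ᵥ V = -V) (hV₂ : V ⬝ᵥ x = 0) (hV₃ : ∀ i, V ⬝ᵥ (P i *ᵥ x) = 0)
    -- W ∈ T₋₁(ξ) = E₊ ∩ T_xM₊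
    (hW₁ : P 0 *ᵥ W = W) (hW₂ : W ⬝ᵥ x = 0) (hW₃ : ∀ i, W ⬝ᵥ (P i *ᵥ x) = 0)
    (hdec : (P 1 * P 2) *ᵥ x = U + V + W) :
    V ⬝ᵥ V = W ⬝ᵥ W := by
  classical
  have hflip : ∀ (i : Fin 3) (v w : Fin (2 * l) → ℝ),
      v ⬝ᵥ (P i *ᵥ w) = (P i *ᵥ v) ⬝ᵥ w := by
    intro i v w
    rw [Matrix.dotProduct_mulVec, ← Matrix.mulVec_transpose, (hsymm i).eq]
  have hsq : ∀ (i : Fin 3) (v : Fin (2 * l) → ℝ), P i *ᵥ (P i *ᵥ v) = v := by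
    intro i v
    have h := hcl i i
    rw [if_pos rfl] at h
    have h2 : P i * P i = 1 := by
      have h3 : (2 : ℝ) • (P i * P i) = (2 : ℝ) • (1 : Matrix (Fin (2 * l)) (Fin (2 * l)) ℝ) := by
        rw [two_smul, h]
      exact smul_right_injective _ (by norm_num) h3
    rw [Matrix.mulVec_mulVec, h2, Matrix.one_mulVec]
  have hswap : ∀ (i j : Fin 3), i ≠ j → ∀ (v : Fin (2 * l) → ℝ),
      P i *ᵥ (P j *ᵥ v) = -(P j *ᵥ (P i *ᵥ v)) := by
    intro i j hij v
    have h := hcl i j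
    rw [if_neg hij] at h
    have h2 : P i * P j = -(P j * P i) := eq_neg_of_add_eq_zero_left h
    rw [Matrix.mulVec_mulVec, Matrix.mulVec_mulVec, h2, Matrix.neg_mulVec]
  have hMx' : ∀ i, x ⬝ᵥ (P i *ᵥ x) = 0 := by
    intro i; rw [dotProduct_comm]; exact hMx i
  have h01 : (0 : Fin 3) ≠ 1 := by decide
  have h02 : (0 : Fin 3) ≠ 2 := by decide
  -- key 9-case scalar identity
  have hkey : ∀ j i : Fin 3, x ⬝ᵥ (P j *ᵥ (P i *ᵥ (P 0 *ᵥ x))) = 0 := by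
    intro j i
    by_cases hj : j = 0
    · subst hj
      by_cases hi : i = 0
      · subst hi
        rw [hsq 0 x]
        exact hMx' 0
      · rw [hswap 0 i (Ne.symm hi), hsq 0 x, dotProduct_neg, hMx', neg_zero]
    · by_cases hi : i = 0
      · subst hi
        rw [hsq 0 x]
        exact hMx' j
      · by_cases hij : j = i
        · subst hij
          rw [hsq j (P 0 *ᵥ x)]
          exact hMx' 0
        · -- j ≠ i, both nonzero: antisymmetry argument
          have e1 : x ⬝ᵥ (P j *ᵥ (P i *ᵥ (P 0 *ᵥ x)))
              = (P 0 *ᵥ (P i *ᵥ (P j *ᵥ x))) ⬝ᵥ x := by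
            rw [hflip j, hflip i, hflip 0]
          have e2 : P 0 *ᵥ (P i *ᵥ (P j *ᵥ x))
              = -(P j *ᵥ (P i *ᵥ (P 0 *ᵥ x))) := by
            rw [hswap 0 i (Ne.symm hi), hswap 0 j (Ne.symm hj) x, Matrix.mulVec_neg, neg_neg,
              hswap i j (Ne.symm hij)]
          rw [e2, neg_dotProduct, dotProduct_comm] at e1
          rw [dotProduct_comm]
          linarith
  obtain ⟨Q, hQmem, hQtr, hQU⟩ := hU
  obtain ⟨c, hc⟩ := (Submodule.mem_span_range_iff_exists_fun ℝ).mp hQmem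
  have hU' : U = c 0 • (P 0 *ᵥ (P 0 *ᵥ x)) + c 1 • (P 1 *ᵥ (P 0 *ᵥ x))
      + c 2 • (P 2 *ᵥ (P 0 *ᵥ x)) := by
    rw [hQU, ← hc, Fin.sum_univ_three, Matrix.add_mulVec, Matrix.add_mulVec,
      Matrix.smul_mulVec, Matrix.smul_mulVec, Matrix.smul_mulVec]
  have hRU : ∀ j, (P j *ᵥ x) ⬝ᵥ U = 0 := by
    intro j
    rw [hU']
    simp only [dotProduct_add, dotProduct_smul]
    simp only [← hflip, hkey, smul_zero, add_zero]
  have hVPi : ∀ i, V ⬝ᵥ (P i *ᵥ (P 0 *ᵥ x)) = 0 := by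
    intro i
    by_cases hi : i = 0
    · subst hi; rw [hsq 0 x]; exact hV₂
    · rw [hswap i 0 hi x, dotProduct_neg, hflip 0, hV₁, neg_dotProduct,
        hV₃, neg_zero, neg_zero]
  have hWPi : ∀ i, W ⬝ᵥ (P i *ᵥ (P 0 *ᵥ x)) = 0 := by
    intro i
    by_cases hi : i = 0
    · subst hi; rw [hsq 0 x]; exact hW₂
    · rw [hswap i 0 hi x, dotProduct_neg, hflip 0, hW₁, hW₃, neg_zero]
  have hVU : V ⬝ᵥ U = 0 := by
    rw [hU']
    simp only [dotProduct_add, dotProduct_smul, hVPi, smul_zero, add_zero]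
  have hWU : W ⬝ᵥ U = 0 := by
    rw [hU']
    simp only [dotProduct_add, dotProduct_smul, hWPi, smul_zero, add_zero]
  have hVP0U : V ⬝ᵥ (P 0 *ᵥ U) = 0 := by
    rw [hflip, hV₁, neg_dotProduct, hVU, neg_zero]
  have hWP0U : W ⬝ᵥ (P 0 *ᵥ U) = 0 := by
    rw [hflip, hW₁, hWU]
  have hP0U : P 0 *ᵥ U = c 0 • (P 0 *ᵥ x) + c 1 • -(P 1 *ᵥ x) + c 2 • -(P 2 *ᵥ x) := by
    rw [hU', Matrix.mulVec_add, Matrix.mulVec_add, Matrix.mulVec_smul, Matrix.mulVec_smul,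
      Matrix.mulVec_smul, hswap 0 1 h01, hswap 0 2 h02, hsq 0 x]
  have hUP0U : U ⬝ᵥ (P 0 *ᵥ U) = 0 := by
    rw [dotProduct_comm, hP0U]
    simp only [add_dotProduct, smul_dotProduct, neg_dotProduct, hRU,
      smul_zero, neg_zero, smul_neg, add_zero]
  have hP0y : P 0 *ᵥ (P 1 *ᵥ (P 2 *ᵥ x)) = P 1 *ᵥ (P 2 *ᵥ (P 0 *ᵥ x)) := by
    rw [hswap 0 1 h01, hswap 0 2 h02 x, Matrix.mulVec_neg, neg_neg]
  have hy : (P 1 *ᵥ (P 2 *ᵥ x)) ⬝ᵥ (P 0 *ᵥ (P 1 *ᵥ (P 2 *ᵥ x))) = 0 := by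
    rw [hP0y, hflip, hsq, hflip, hsq]
    exact hMx' 0
  rw [← Matrix.mulVec_mulVec] at hdec
  rw [hdec, Matrix.mulVec_add, Matrix.mulVec_add, hV₁, hW₁] at hy
  simp only [dotProduct_add, add_dotProduct, dotProduct_neg] at hy
  have cUV : U ⬝ᵥ V = 0 := by rw [dotProduct_comm]; exact hVU
  have cUW : U ⬝ᵥ W = 0 := by rw [dotProduct_comm]; exact hWU
  have cVW : V ⬝ᵥ W = W ⬝ᵥ V := dotProduct_comm V W
  linarith [hy, hUP0U, hVP0U, hWP0U, cUV, cUW, cVW]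
end

section
/- Let {P₀,...,P_m} be a symmetric Clifford system on ℝ^{2l}, m > 2, x ∈ M₊, and α, β ∈ {1,...,m} with α ≠ β. Decompose P_α P_β x = U + V + W with U ∈ T₀(P₀x), V ∈ T₁(P₀x), W ∈ T₋₁(P₀x). Then 2 = |U|² + |P₀U|² + 4|W|² and 2 = |U|² + |P₀U|² + 4|V|²; in particular |V| = |W|. -/
open Matrix

section helpers
variable {n ι : Type*} [Fintype n] [Fintype ι]

lemma symm_dot (A : Matrix n n ℝ) (hA : A.IsSymm) (u v : n → ℝ) :
    (A *ᵥ u) ⬝ᵥ v = u ⬝ᵥ (A *ᵥ v) := by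
  rw [Matrix.dotProduct_mulVec, ← Matrix.mulVec_transpose, hA.eq]

lemma sum_mulVec' (f : ι → Matrix n n ℝ) (v : n → ℝ) :
    (∑ i, f i) *ᵥ v = ∑ i, f i *ᵥ v :=
  map_sum (Matrix.mulVec.addMonoidHomLeft v) f Finset.univ

lemma mulVec_sum' (A : Matrix n n ℝ) (f : ι → n → ℝ) :
    A *ᵥ (∑ i, f i) = ∑ i, A *ᵥ f i := by
  simpa only [Matrix.mulVecLin_apply] using map_sum (Matrix.mulVecLin A) f Finset.univ

lemma sum_dot' (f : ι → n → ℝ) (w : n → ℝ) :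
    (∑ i, f i) ⬝ᵥ w = ∑ i, f i ⬝ᵥ w :=
  map_sum (⟨⟨fun v => v ⬝ᵥ w, zero_dotProduct w⟩,
    fun a b => add_dotProduct a b w⟩ : (n → ℝ) →+ ℝ) f Finset.univ

lemma dot_sum' (f : ι → n → ℝ) (w : n → ℝ) :
    w ⬝ᵥ (∑ i, f i) = ∑ i, w ⬝ᵥ f i :=
  map_sum (⟨⟨fun v => w ⬝ᵥ v, dotProduct_zero w⟩,
    fun a b => dotProduct_add w a b⟩ : (n → ℝ) →+ ℝ) f Finset.univ

end helpers

/-- Let `{P₀,...,P_m}` be a symmetric Clifford system on `ℝ^{2l}`, `m > 2`,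
`x ∈ M₊`, and `α, β ∈ {1,...,m}` with `α ≠ β`.  Decompose `P_α P_β x = U + V + W` with
`U ∈ T₀(P₀x)`, `V ∈ T₁(P₀x) = E₋ ∩ T_xM₊`, `W ∈ T₋₁(P₀x) = E₊ ∩ T_xM₊`.  Then
`2 = |U|² + |P₀U|² + 4|W|²` and `2 = |U|² + |P₀U|² + 4|V|²`; in particular `|V| = |W|`. -/
theorem stmt_8 (m l : ℕ) (hm : 2 < m)
    (P : Fin (m + 1) → Matrix (Fin (2 * l)) (Fin (2 * l)) ℝ)
    (hsymm : ∀ i, (P i).IsSymm)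
    (hcl : ∀ i j, P i * P j + P j * P i =
      if i = j then (2 : ℝ) • (1 : Matrix (Fin (2 * l)) (Fin (2 * l)) ℝ) else 0)
    (x : Fin (2 * l) → ℝ) (hx : x ⬝ᵥ x = 1) (hMx : ∀ i, (P i *ᵥ x) ⬝ᵥ x = 0)
    (α β : Fin (m + 1)) (hα : α ≠ 0) (hβ : β ≠ 0) (hαβ : α ≠ β)
    (U V W : Fin (2 * l) → ℝ)
    -- U ∈ T₀(ξ): U = Q P₀ x with Q in the span of {P₀,...,P_m} and ⟨Q, P₀⟩ = 0
    (hU : ∃ Q ∈ Submodule.span ℝ (Set.range P),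
      (Q * P 0).trace = 0 ∧ U = Q *ᵥ (P 0 *ᵥ x))
    -- V ∈ T₁(ξ) = E₋ ∩ T_x M₊
    (hV₁ : P 0 *ᵥ V = -V) (hV₂ : V ⬝ᵥ x = 0) (hV₃ : ∀ i, V ⬝ᵥ (P i *ᵥ x) = 0)
    -- W ∈ T₋₁(ξ) = E₊ ∩ T_x M₊
    (hW₁ : P 0 *ᵥ W = W) (hW₂ : W ⬝ᵥ x = 0) (hW₃ : ∀ i, W ⬝ᵥ (P i *ᵥ x) = 0)
    (hdec : (P α * P β) *ᵥ x = U + V + W) :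
    2 = U ⬝ᵥ U + (P 0 *ᵥ U) ⬝ᵥ (P 0 *ᵥ U) + 4 * (W ⬝ᵥ W) ∧
    2 = U ⬝ᵥ U + (P 0 *ᵥ U) ⬝ᵥ (P 0 *ᵥ U) + 4 * (V ⬝ᵥ V) ∧
    V ⬝ᵥ V = W ⬝ᵥ W := by
  obtain ⟨Q, hQspan, hQtr, hUdef⟩ := hU
  obtain ⟨c, hQ⟩ := (Submodule.mem_span_range_iff_exists_fun ℝ).mp hQspan
  have hdot : ∀ i (u v : Fin (2 * l) → ℝ), (P i *ᵥ u) ⬝ᵥ v = u ⬝ᵥ (P i *ᵥ v) :=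
    fun i => symm_dot (P i) (hsymm i)
  have hsq : ∀ i, P i * P i = 1 := by
    intro i
    have h := hcl i i
    rw [if_pos rfl] at h
    have h2 : (2 : ℝ) • (P i * P i) = (2 : ℝ) • (1 : Matrix (Fin (2*l)) (Fin (2*l)) ℝ) := by
      rw [two_smul]; exact h
    exact smul_right_injective _ (two_ne_zero) h2
  have hanti : ∀ i j, i ≠ j → P i * P j = -(P j * P i) := by
    intro i j hij
    have h := hcl i j
    rw [if_neg hij] at h
    exact eq_neg_of_add_eq_zero_left h
  have hPP : ∀ i (w : Fin (2 * l) → ℝ), P i *ᵥ (P i *ᵥ w) = w := by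
    intro i w; rw [mulVec_mulVec, hsq, one_mulVec]
  have hPA : ∀ i j, i ≠ j → ∀ w : Fin (2 * l) → ℝ,
      P i *ᵥ (P j *ᵥ w) = -(P j *ᵥ (P i *ᵥ w)) := by
    intro i j hij w
    rw [mulVec_mulVec, mulVec_mulVec, hanti i j hij, neg_mulVec]
  have hl : l ≠ 0 := by
    intro h
    subst h
    simp [dotProduct] at hx
  -- c 0 = 0
  have hc0 : c 0 = 0 := by
    have htr : ∀ i : Fin (m+1), i ≠ 0 → (P i * P 0).trace = 0 := by
      intro i hi
      have h := hcl i 0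
      rw [if_neg hi] at h
      have h2 := congrArg Matrix.trace h
      rw [Matrix.trace_add, Matrix.trace_zero, Matrix.trace_mul_comm (P 0) (P i)] at h2
      linarith
    have hQP : Q * P 0 = ∑ i, c i • (P i * P 0) := by
      rw [← hQ, Finset.sum_mul]
      simp [smul_mul_assoc]
    have hT : (Q * P 0).trace = c 0 * (2 * l : ℕ) := by
      rw [hQP, Matrix.trace_sum]
      rw [Finset.sum_eq_single 0]
      · rw [Matrix.trace_smul, hsq, Matrix.trace_one]; simp
      · intro i _ hi
        rw [Matrix.trace_smul, htr i hi]; simp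
      · simp
    rw [hQtr] at hT
    have h2l : ((2 * l : ℕ) : ℝ) ≠ 0 := by simp [hl]
    rcases mul_eq_zero.mp hT.symm with h | h
    · exact h
    · exact absurd h h2l
  set ξ : Fin (2 * l) → ℝ := P 0 *ᵥ x with hξ
  -- key: ⟨ξ, P i P j x⟩ = 0 for i,j ≠ 0
  have hzero : ∀ i j : Fin (m+1), i ≠ 0 → j ≠ 0 → ξ ⬝ᵥ (P i *ᵥ (P j *ᵥ x)) = 0 := by
    have claimA : ∀ i j : Fin (m+1), i ≠ 0 → j ≠ 0 →
        ξ ⬝ᵥ (P i *ᵥ (P j *ᵥ x)) = ξ ⬝ᵥ (P j *ᵥ (P i *ᵥ x)) := by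
      intro i j hi hj
      calc ξ ⬝ᵥ (P i *ᵥ (P j *ᵥ x))
          = (P 0 *ᵥ x) ⬝ᵥ (P i *ᵥ (P j *ᵥ x)) := by rw [hξ]
        _ = x ⬝ᵥ (P 0 *ᵥ (P i *ᵥ (P j *ᵥ x))) := hdot 0 _ _
        _ = x ⬝ᵥ (P i *ᵥ (P j *ᵥ (P 0 *ᵥ x))) := by
              rw [hPA 0 i (Ne.symm hi), hPA 0 j (Ne.symm hj), Matrix.mulVec_neg, neg_neg]
        _ = (P i *ᵥ x) ⬝ᵥ (P j *ᵥ (P 0 *ᵥ x)) := (hdot i _ _).symm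
        _ = (P j *ᵥ (P i *ᵥ x)) ⬝ᵥ (P 0 *ᵥ x) := (hdot j _ _).symm
        _ = ξ ⬝ᵥ (P j *ᵥ (P i *ᵥ x)) := by rw [dotProduct_comm, hξ]
    intro i j hi hj
    by_cases hij : i = j
    · subst hij
      rw [hPP i, hξ]
      exact hMx 0
    · have h1 : ξ ⬝ᵥ (P i *ᵥ (P j *ᵥ x)) = -(ξ ⬝ᵥ (P j *ᵥ (P i *ᵥ x))) := by
        rw [hPA i j hij, dotProduct_neg]
      have h2 := claimA i j hi hj
      rw [h2] at h1
      linarith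
  -- U as a sum
  have hUsum : U = ∑ i, c i • (P i *ᵥ ξ) := by
    rw [hUdef, ← hQ, sum_mulVec']
    simp [smul_mulVec]
  have hVterm : ∀ i, V ⬝ᵥ (P i *ᵥ ξ) = 0 := by
    intro i
    by_cases hi : i = 0
    · subst hi; rw [hξ, hPP 0]; exact hV₂
    · rw [hξ, hPA i 0 hi, dotProduct_neg, ← hdot 0, hV₁, neg_dotProduct, neg_neg]
      exact hV₃ i
  have hWterm : ∀ i, W ⬝ᵥ (P i *ᵥ ξ) = 0 := by
    intro i
    by_cases hi : i = 0
    · subst hi; rw [hξ, hPP 0]; exact hW₂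
    · rw [hξ, hPA i 0 hi, dotProduct_neg, ← hdot 0, hW₁]
      simp [hW₃ i]
  have hUV : U ⬝ᵥ V = 0 := by
    rw [hUsum, sum_dot']
    apply Finset.sum_eq_zero
    intro i _
    rw [smul_dotProduct, dotProduct_comm, hVterm i, smul_zero]
  have hUW : U ⬝ᵥ W = 0 := by
    rw [hUsum, sum_dot']
    apply Finset.sum_eq_zero
    intro i _
    rw [smul_dotProduct, dotProduct_comm, hWterm i, smul_zero]
  -- P0 U as a sum
  have hP0U : P 0 *ᵥ U = ∑ i, c i • (-(P i *ᵥ x)) := by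
    rw [hUsum, mulVec_sum']
    refine Finset.sum_congr rfl fun i _ => ?_
    rw [Matrix.mulVec_smul]
    by_cases hi : i = 0
    · subst hi; rw [hc0]; simp
    · rw [hPA 0 i (Ne.symm hi), hξ, hPP 0]
  -- ⟨U, P0 U⟩ = 0
  have hUP0U : U ⬝ᵥ (P 0 *ᵥ U) = 0 := by
    rw [hP0U, hUsum, sum_dot']
    apply Finset.sum_eq_zero
    intro i _
    by_cases hi : i = 0
    · subst hi; rw [hc0]; simp
    · rw [smul_dotProduct, dot_sum']
      rw [Finset.sum_eq_zero, smul_zero]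
      intro j _
      by_cases hj : j = 0
      · subst hj; rw [hc0]; simp
      · rw [dotProduct_smul, dotProduct_neg, hdot i, hzero i j hi hj]
        simp
  -- orthogonality with P0 applied
  have hP0UV : (P 0 *ᵥ U) ⬝ᵥ V = 0 := by
    rw [hdot 0, hV₁, dotProduct_neg, hUV, neg_zero]
  have hP0UW : (P 0 *ᵥ U) ⬝ᵥ W = 0 := by
    rw [hdot 0, hW₁]; exact hUW
  have hVW : V ⬝ᵥ W = 0 := by
    have h1 : (P 0 *ᵥ V) ⬝ᵥ W = V ⬝ᵥ (P 0 *ᵥ W) := hdot 0 V W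
    rw [hV₁, hW₁, neg_dotProduct] at h1
    linarith
  -- y = Pα Pβ x
  have hy : P α *ᵥ (P β *ᵥ x) = U + V + W := by
    rw [mulVec_mulVec]; exact hdec
  have hyy : (U + V + W) ⬝ᵥ (U + V + W) = 1 := by
    rw [← hy, hdot α, hPP α, hdot β, hPP β]
    exact hx
  -- P0 y
  have hP0y : P 0 *ᵥ (U + V + W) = P α *ᵥ (P β *ᵥ ξ) := by
    rw [← hy, hPA 0 α (Ne.symm hα), hPA 0 β (Ne.symm hβ), Matrix.mulVec_neg, neg_neg, hξ]
  have hP0y' : P 0 *ᵥ (U + V + W) = (P 0 *ᵥ U) + (-V) + W := by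
    rw [Matrix.mulVec_add, Matrix.mulVec_add, hV₁, hW₁]
  have hyP0y : (U + V + W) ⬝ᵥ (P 0 *ᵥ (U + V + W)) = 0 := by
    rw [hP0y, ← hy]
    rw [hdot α, hPP α, hdot β, hPP β, hξ, dotProduct_comm]
    exact hMx 0
  have hP0yP0y : (P 0 *ᵥ (U + V + W)) ⬝ᵥ (P 0 *ᵥ (U + V + W)) = 1 := by
    rw [hdot 0, hPP 0]
    exact hyy
  -- expand
  have e1 : U ⬝ᵥ U + V ⬝ᵥ V + W ⬝ᵥ W = 1 := by
    have := hyy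
    simp only [add_dotProduct, dotProduct_add] at this
    rw [dotProduct_comm V U, dotProduct_comm W U, dotProduct_comm W V] at this
    rw [hUV, hUW, hVW] at this
    linarith
  have e2 : (P 0 *ᵥ U) ⬝ᵥ (P 0 *ᵥ U) + V ⬝ᵥ V + W ⬝ᵥ W = 1 := by
    have h := hP0yP0y
    rw [hP0y'] at h
    simp only [add_dotProduct, dotProduct_add, neg_dotProduct, dotProduct_neg, neg_neg] at h
    rw [dotProduct_comm V (P 0 *ᵥ U), dotProduct_comm W (P 0 *ᵥ U), dotProduct_comm W V] at h
    rw [hP0UV, hP0UW, hVW] at h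
    linarith
  have e3 : W ⬝ᵥ W - V ⬝ᵥ V = 0 := by
    have h := hyP0y
    rw [hP0y'] at h
    simp only [add_dotProduct, dotProduct_add, neg_dotProduct, dotProduct_neg] at h
    rw [dotProduct_comm V (P 0 *ᵥ U), dotProduct_comm W (P 0 *ᵥ U), dotProduct_comm W V] at h
    rw [hUP0U, hP0UV, hP0UW, hUV, hUW, hVW] at h
    linarith
  refine ⟨by linarith, by linarith, by linarith⟩
end

section
/- Let M₊ be the focal submanifold of an FKM-type isoparametric polynomial determined by a symmetric Clifford system {P₀,...,P_m} on ℝ^{2l}. At any point x ∈ M₊, the squared norm of the second fundamental form equals S = 2(l-m-1)(m+1). -/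
open Matrix

lemma parseval {n : ℕ} {κ : Type} [Fintype κ] [DecidableEq κ]
    (hcard : Fintype.card κ = n) (b : κ → Fin n → ℝ)
    (hortho : ∀ i j, b i ⬝ᵥ b j = if i = j then 1 else 0)
    (u w : Fin n → ℝ) :
    ∑ r, (u ⬝ᵥ b r) * (w ⬝ᵥ b r) = u ⬝ᵥ w := by
  classical
  let E : κ ≃ Fin n := Fintype.equivFinOfCardEq hcard
  set B : Matrix (Fin n) (Fin n) ℝ := Matrix.of (fun r k => b (E.symm r) k) with hB
  have hBBT : B * Bᵀ = 1 := by
    ext r s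
    have h1 : (B * Bᵀ) r s = b (E.symm r) ⬝ᵥ b (E.symm s) := by
      simp [Matrix.mul_apply, dotProduct, hB]
    rw [h1, hortho]
    simp [Matrix.one_apply, E.symm.injective.eq_iff]
  have hBTB : Bᵀ * B = 1 := mul_eq_one_comm.mp hBBT
  have hrow : ∀ (v : Fin n → ℝ) r, (B *ᵥ v) r = v ⬝ᵥ b (E.symm r) := by
    intro v r
    simp [Matrix.mulVec, dotProduct, hB, mul_comm]
  calc ∑ r, (u ⬝ᵥ b r) * (w ⬝ᵥ b r)
      = ∑ r : Fin n, (u ⬝ᵥ b (E.symm r)) * (w ⬝ᵥ b (E.symm r)) :=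
        (Equiv.sum_comp E.symm (fun k => (u ⬝ᵥ b k) * (w ⬝ᵥ b k))).symm
    _ = (B *ᵥ u) ⬝ᵥ (B *ᵥ w) := by simp [dotProduct, hrow]
    _ = (u ᵥ* Bᵀ) ⬝ᵥ (B *ᵥ w) := by rw [Matrix.vecMul_transpose]
    _ = ((u ᵥ* Bᵀ) ᵥ* B) ⬝ᵥ w := Matrix.dotProduct_mulVec _ _ _
    _ = (u ᵥ* (Bᵀ * B)) ⬝ᵥ w := by rw [Matrix.vecMul_vecMul]
    _ = u ⬝ᵥ w := by rw [hBTB, Matrix.vecMul_one]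

lemma card_le_of_orthonormal {n : ℕ} {κ : Type} [Fintype κ] [DecidableEq κ]
    (b : κ → Fin n → ℝ) (hortho : ∀ i j, b i ⬝ᵥ b j = if i = j then 1 else 0) :
    Fintype.card κ ≤ n := by
  let B : Matrix κ (Fin n) ℝ := Matrix.of b
  have hBBT : B * Bᵀ = 1 := by
    ext r s
    have := hortho r s
    simpa [Matrix.mul_apply, dotProduct, Matrix.one_apply, B] using this
  calc Fintype.card κ = (1 : Matrix κ κ ℝ).rank := (Matrix.rank_one).symm
    _ = (B * Bᵀ).rank := by rw [hBBT]
    _ ≤ B.rank := Matrix.rank_mul_le_left _ _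
    _ ≤ n := by simpa using B.rank_le_card_width




/-- For the focal submanifold `M₊` of the FKM-type isoparametric polynomial
determined by a symmetric Clifford system `{P₀,...,P_m}` on `ℝ^{2l}`, at any point `x ∈ M₊`,
the squared norm of the second fundamental form equals `S = 2(l-m-1)(m+1)`.
Here `S = Σ_{α,i,j} ⟨A_α e_i, e_j⟩²` for an orthonormal tangent basis `{e_i}` of
`T_x M₊`, and the shape operator satisfies `⟨A_α e_i, e_j⟩ = -⟨P_α e_i, e_j⟩`. -/
theorem stmt_9 (m l : ℕ) (P : Fin (m + 1) → Matrix (Fin (2 * l)) (Fin (2 * l)) ℝ)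
    (hsymm : ∀ i, (P i).IsSymm)
    (hcl : ∀ i j, P i * P j + P j * P i =
      if i = j then (2 : ℝ) • (1 : Matrix (Fin (2 * l)) (Fin (2 * l)) ℝ) else 0)
    (x : Fin (2 * l) → ℝ) (hx : x ⬝ᵥ x = 1) (hMx : ∀ i, (P i *ᵥ x) ⬝ᵥ x = 0)
    (e : Fin (2 * l - m - 2) → Fin (2 * l) → ℝ)
    (he : ∀ i j, e i ⬝ᵥ e j = if i = j then 1 else 0)
    (hex : ∀ i, e i ⬝ᵥ x = 0) (heP : ∀ i j, e i ⬝ᵥ (P j *ᵥ x) = 0) :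
    ∑ α : Fin (m + 1), ∑ i, ∑ j, (-((P α *ᵥ e i) ⬝ᵥ e j)) ^ 2 =
      2 * ((l : ℝ) - m - 1) * (m + 1) := by

  classical
  have hsd : ∀ α (u v : Fin (2*l) → ℝ), (P α *ᵥ u) ⬝ᵥ v = u ⬝ᵥ (P α *ᵥ v) := by
    intro α u v
    conv_rhs => rw [Matrix.dotProduct_mulVec]
    rw [← Matrix.mulVec_transpose, (hsymm α).eq]
  have hsq : ∀ α, P α * P α = 1 := by
    intro α
    have h := hcl α α
    rw [if_pos rfl] at h
    have h2 : (2:ℝ) • (P α * P α) = (2:ℝ) • (1 : Matrix (Fin (2*l)) (Fin (2*l)) ℝ) := by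
      rw [two_smul ℝ (P α * P α)]; exact h
    exact smul_right_injective _ two_ne_zero h2
  have hanti : ∀ {α β}, α ≠ β → P α * P β = -(P β * P α) := by
    intro α β h
    have := hcl α β
    rw [if_neg h] at this
    exact eq_neg_of_add_eq_zero_left this
  have hxPx : ∀ β, x ⬝ᵥ (P β *ᵥ x) = 0 := by
    intro β; rw [dotProduct_comm]; exact hMx β
  have hPP : ∀ β γ, (P β *ᵥ x) ⬝ᵥ (P γ *ᵥ x) = if β = γ then 1 else 0 := by
    intro β γ
    have h1 : (P β *ᵥ x) ⬝ᵥ (P γ *ᵥ x) = x ⬝ᵥ ((P β * P γ) *ᵥ x) := by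
      rw [hsd, Matrix.mulVec_mulVec]
    have h2 : (P β *ᵥ x) ⬝ᵥ (P γ *ᵥ x) = x ⬝ᵥ ((P γ * P β) *ᵥ x) := by
      rw [dotProduct_comm, hsd, Matrix.mulVec_mulVec]
    have h3 : (2:ℝ) * ((P β *ᵥ x) ⬝ᵥ (P γ *ᵥ x))
        = x ⬝ᵥ ((P β * P γ + P γ * P β) *ᵥ x) := by
      rw [Matrix.add_mulVec, dotProduct_add, ← h1, ← h2]; ring
    rw [hcl] at h3
    by_cases h : β = γ
    · rw [if_pos h] at h3
      rw [if_pos h]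
      have : x ⬝ᵥ (((2:ℝ) • (1 : Matrix (Fin (2*l)) (Fin (2*l)) ℝ)) *ᵥ x) = 2 := by
        rw [Matrix.smul_mulVec, Matrix.one_mulVec, dotProduct_smul, hx]
        norm_num
      rw [this] at h3; linarith
    · rw [if_neg h] at h3
      rw [if_neg h]
      rw [Matrix.zero_mulVec, dotProduct_zero] at h3
      linarith
  have hPe : ∀ β j, (P β *ᵥ x) ⬝ᵥ e j = 0 := by
    intro β j; rw [dotProduct_comm]; exact heP j β
  have hxe : ∀ j, x ⬝ᵥ e j = 0 := by
    intro j; rw [dotProduct_comm]; exact hex j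
  -- dimension bound
  have h2l : m + 2 ≤ 2 * l := by
    have hb0 : ∀ i j : Unit ⊕ Fin (m+1),
        (Sum.elim (fun _ => x) (fun β => P β *ᵥ x)) i ⬝ᵥ
        (Sum.elim (fun _ => x) (fun β => P β *ᵥ x)) j = if i = j then 1 else 0 := by
      rintro (i|i) (j|j) <;> simp [hx, hxPx, hMx, hPP]
    have := card_le_of_orthonormal _ hb0
    simp at this; omega
  -- full orthonormal basis
  set b : (Unit ⊕ Fin (m+1) ⊕ Fin (2*l - m - 2)) → Fin (2*l) → ℝ :=
    Sum.elim (fun _ => x) (Sum.elim (fun β => P β *ᵥ x) e) with hbdef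
  have hcard : Fintype.card (Unit ⊕ Fin (m+1) ⊕ Fin (2*l - m - 2)) = 2*l := by
    simp; omega
  have hb : ∀ i j, b i ⬝ᵥ b j = if i = j then 1 else 0 := by
    rintro (i|β|i) (j|γ|j) <;>
      simp [hbdef, hx, hxPx, hMx, hPP, hPe, heP, hex, hxe, he]
  have hparse : ∀ u : Fin (2*l) → ℝ,
      (u ⬝ᵥ x)^2 + (∑ β, (u ⬝ᵥ (P β *ᵥ x))^2) + (∑ j, (u ⬝ᵥ e j)^2) = u ⬝ᵥ u := by
    intro u
    have h := parseval hcard b hb u u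
    rw [Fintype.sum_sum_type] at h
    simp only [Fintype.sum_sum_type, hbdef, Sum.elim_inl, Sum.elim_inr] at h
    simp only [sq]
    simp at h
    linarith [h]
  have key2 : ∀ α β i, (P α *ᵥ e i) ⬝ᵥ (P β *ᵥ x) = e i ⬝ᵥ ((P α * P β) *ᵥ x) := by
    intro α β i
    rw [hsd, Matrix.mulVec_mulVec]
  have halpha : ∀ α i, (P α *ᵥ e i) ⬝ᵥ (P α *ᵥ x) = 0 := by
    intro α i
    rw [key2, hsq, Matrix.one_mulVec]
    exact hex i
  have key1 : ∀ α i, ∑ j, ((P α *ᵥ e i) ⬝ᵥ e j)^2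
      = 1 - ∑ β, ((P α *ᵥ e i) ⬝ᵥ (P β *ᵥ x))^2 := by
    intro α i
    have h1 := hparse (P α *ᵥ e i)
    have h2 : (P α *ᵥ e i) ⬝ᵥ x = 0 := by rw [hsd]; exact heP i α
    have h3 : (P α *ᵥ e i) ⬝ᵥ (P α *ᵥ e i) = 1 := by
      rw [hsd, Matrix.mulVec_mulVec, hsq, Matrix.one_mulVec, he, if_pos rfl]
    rw [h2, h3] at h1
    linarith
  have key3 : ∀ α β, β ≠ α → ∑ i, (e i ⬝ᵥ ((P α * P β) *ᵥ x))^2 = 1 := by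
    intro α β hne
    set y := (P α * P β) *ᵥ x with hy
    have hy' : y = P α *ᵥ (P β *ᵥ x) := by rw [hy, Matrix.mulVec_mulVec]
    have hyy : y ⬝ᵥ y = 1 := by
      rw [hy', hsd, Matrix.mulVec_mulVec, Matrix.mulVec_mulVec, hsq, Matrix.one_mul,
        hPP, if_pos rfl]
    have hyx : y ⬝ᵥ x = 0 := by
      rw [hy', hsd, hPP, if_neg hne]
    have hyP : ∀ γ, y ⬝ᵥ (P γ *ᵥ x) = 0 := by
      intro γ
      by_cases hγα : γ = α
      · subst hγα
        rw [hy', hsd, Matrix.mulVec_mulVec, hsq, Matrix.one_mulVec]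
        exact hMx β
      by_cases hγβ : γ = β
      · subst hγβ
        rw [hy', hsd, Matrix.mulVec_mulVec, hanti (Ne.symm hne),
          Matrix.neg_mulVec, dotProduct_neg, ← Matrix.mulVec_mulVec, hsd γ,
          Matrix.mulVec_mulVec, Matrix.mulVec_mulVec, hsq, Matrix.one_mul, hxPx, neg_zero]
      · have hform : y ⬝ᵥ (P γ *ᵥ x) = x ⬝ᵥ ((P β * P α * P γ) *ᵥ x) := by
          rw [hy', hsd, hsd β, Matrix.mulVec_mulVec, Matrix.mulVec_mulVec]
        have hαβ : α ≠ β := Ne.symm hne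
        have hQ : (P β * P α * P γ)ᵀ = -(P β * P α * P γ) := by
          calc (P β * P α * P γ)ᵀ = (P γ)ᵀ * ((P α)ᵀ * (P β)ᵀ) := by
                rw [Matrix.transpose_mul, Matrix.transpose_mul]
            _ = P γ * (P α * P β) := by rw [(hsymm α).eq, (hsymm β).eq, (hsymm γ).eq]
            _ = (P γ * P α) * P β := by rw [Matrix.mul_assoc]
            _ = (-(P α * P γ)) * P β := by rw [hanti hγα]
            _ = -(P α * (P γ * P β)) := by rw [Matrix.neg_mul, Matrix.mul_assoc]
            _ = -(P α * (-(P β * P γ))) := by rw [hanti hγβ]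
            _ = P α * P β * P γ := by rw [Matrix.mul_neg, neg_neg, ← Matrix.mul_assoc]
            _ = (-(P β * P α)) * P γ := by rw [hanti hαβ]
            _ = -(P β * P α * P γ) := by rw [Matrix.neg_mul]
        rw [hform]
        have h2 : x ⬝ᵥ ((P β * P α * P γ) *ᵥ x) = -(x ⬝ᵥ ((P β * P α * P γ) *ᵥ x)) := by
          conv_lhs => rw [Matrix.dotProduct_mulVec, ← Matrix.mulVec_transpose, hQ]
          rw [Matrix.neg_mulVec, neg_dotProduct, dotProduct_comm]
        linarith
    have h1 := hparse y
    rw [hyx, hyy] at h1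
    simp only [hyP] at h1
    have h2 : ∑ i, (e i ⬝ᵥ y)^2 = ∑ j, (y ⬝ᵥ e j)^2 := by
      apply Finset.sum_congr rfl
      intro i _
      rw [dotProduct_comm]
    rw [h2]
    simp at h1
    linarith
  have hcast : ((2*l - m - 2 : ℕ) : ℝ) = 2*(l:ℝ) - m - 2 := by
    have h : (2*l - m - 2) + (m + 2) = 2*l := by omega
    have h2 := congrArg (Nat.cast : ℕ → ℝ) h
    push_cast at h2
    linarith
  have hαtot : ∀ α, ∑ i, ∑ j, ((P α *ᵥ e i) ⬝ᵥ e j)^2 = 2*(l:ℝ) - m - 2 - m := by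
    intro α
    have hswap : ∑ i, ∑ β, ((P α *ᵥ e i) ⬝ᵥ (P β *ᵥ x))^2 = (m : ℝ) := by
      rw [Finset.sum_comm]
      have hinner : ∀ β, ∑ i, ((P α *ᵥ e i) ⬝ᵥ (P β *ᵥ x))^2
          = if β = α then (0:ℝ) else 1 := by
        intro β
        by_cases hβ : β = α
        · subst hβ; simp [halpha]
        · rw [if_neg hβ, ← key3 α β hβ]
          exact Finset.sum_congr rfl (fun i _ => by rw [key2])
      rw [Finset.sum_congr rfl (fun β _ => hinner β)]
      have hsum : ∑ β : Fin (m+1), (if β = α then (0:ℝ) else 1)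
          = ∑ β : Fin (m+1), ((1:ℝ) - if β = α then (1:ℝ) else 0) := by
        exact Finset.sum_congr rfl (fun β _ => by by_cases h : β = α <;> simp [h])
      rw [hsum, Finset.sum_sub_distrib, Finset.sum_const,
        Finset.sum_ite_eq' Finset.univ α (fun _ => (1:ℝ))]
      simp
    have h1 : ∑ i, ∑ j, ((P α *ᵥ e i) ⬝ᵥ e j)^2
        = ∑ i : Fin (2*l - m - 2), ((1:ℝ) - ∑ β, ((P α *ᵥ e i) ⬝ᵥ (P β *ᵥ x))^2) :=
      Finset.sum_congr rfl (fun i _ => key1 α i)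
    rw [h1, Finset.sum_sub_distrib, hswap, Finset.sum_const, Finset.card_univ,
      Fintype.card_fin, nsmul_eq_mul, mul_one, hcast]
  simp only [neg_sq]
  rw [Finset.sum_congr rfl (fun α _ => hαtot α), Finset.sum_const, Finset.card_univ,
    Fintype.card_fin, nsmul_eq_mul]
  push_cast
  ring
end

section
/- Let F(x) = |x|⁴ - 2 Σ_{i=0}^{m} ⟨P_i x, x⟩² for a symmetric Clifford system {P₀,...,P_m} on ℝ^{2l}, and f = F restricted to S^{2l-1}. Then |∇f|² = 16(1 - f²), where ∇f is the spherical gradient. -/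
open scoped RealInnerProductSpace

section aux
variable {n : ℕ}

lemma aux_inner_symm (M : Matrix (Fin n) (Fin n) ℝ) (v w : EuclideanSpace ℝ (Fin n)) :
    ⟪Matrix.toEuclideanLin M v, w⟫ = ⟪v, Matrix.toEuclideanLin M.transpose w⟫ := by
  simp [Matrix.toEuclideanLin_apply, PiLp.inner_apply, Matrix.mulVec, dotProduct,
    Finset.mul_sum, Finset.sum_mul]
  rw [Finset.sum_comm]
  congr 1; ext i; congr 1; ext j; ring

lemma aux_comp (M N : Matrix (Fin n) (Fin n) ℝ) (v : EuclideanSpace ℝ (Fin n)) :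
    Matrix.toEuclideanLin (M * N) v = Matrix.toEuclideanLin M (Matrix.toEuclideanLin N v) := by
  simp [Matrix.toEuclideanLin_apply, Matrix.mulVec_mulVec]

lemma aux_smul_one (c : ℝ) (v : EuclideanSpace ℝ (Fin n)) :
    Matrix.toEuclideanLin (c • (1 : Matrix (Fin n) (Fin n) ℝ)) v = c • v := by
  simp [Matrix.toEuclideanLin_apply]

lemma aux_one (v : EuclideanSpace ℝ (Fin n)) :
    Matrix.toEuclideanLin (1 : Matrix (Fin n) (Fin n) ℝ) v = v := by
  simp [Matrix.toEuclideanLin_apply]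

noncomputable def ACLM (M : Matrix (Fin n) (Fin n) ℝ) :
    EuclideanSpace ℝ (Fin n) →L[ℝ] EuclideanSpace ℝ (Fin n) :=
  LinearMap.toContinuousLinearMap (Matrix.toEuclideanLin M)

lemma grad_term (M : Matrix (Fin n) (Fin n) ℝ) (hM : M.IsSymm)
    (x : EuclideanSpace ℝ (Fin n)) :
    HasGradientAt (fun y : EuclideanSpace ℝ (Fin n) => ⟪Matrix.toEuclideanLin M y, y⟫ ^ 2)
      ((4 * ⟪Matrix.toEuclideanLin M x, x⟫) • Matrix.toEuclideanLin M x) x := by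
  have h1 : HasFDerivAt (fun y : EuclideanSpace ℝ (Fin n) => ⟪Matrix.toEuclideanLin M y, y⟫)
      ((fderivInnerCLM ℝ (ACLM M x, x)).comp ((ACLM M).prod (ContinuousLinearMap.id ℝ _))) x := by
    exact ((ACLM M).hasFDerivAt).inner ℝ (hasFDerivAt_id x)
  have h2 := h1.fun_mul h1
  rw [hasGradientAt_iff_hasFDerivAt]
  have : (fun y : EuclideanSpace ℝ (Fin n) => ⟪Matrix.toEuclideanLin M y, y⟫ ^ 2)
      = fun y => ⟪Matrix.toEuclideanLin M y, y⟫ * ⟪Matrix.toEuclideanLin M y, y⟫ := by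
    funext y; ring
  rw [this]
  convert h2 using 1
  · ext a b; rfl
  ext v
  simp only [InnerProductSpace.toDual_apply_apply, ContinuousLinearMap.comp_apply,
    ContinuousLinearMap.add_apply, ContinuousLinearMap.smul_apply,
    ContinuousLinearMap.prod_apply, ContinuousLinearMap.coe_id', id_eq,
    fderivInnerCLM_apply, smul_eq_mul, ACLM, LinearMap.coe_toContinuousLinearMap',
    real_inner_smul_left]
  have hsym : ⟪Matrix.toEuclideanLin M v, x⟫ = ⟪v, Matrix.toEuclideanLin M x⟫ := by
    rw [aux_inner_symm]; rw [hM.eq]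
  rw [hsym, real_inner_comm v (Matrix.toEuclideanLin M x)]; ring

lemma grad_sq (x : EuclideanSpace ℝ (Fin n)) :
    HasGradientAt (fun y : EuclideanSpace ℝ (Fin n) => ⟪y, y⟫ ^ 2)
      ((4 * ⟪x, x⟫) • x) x := by
  have := grad_term (1 : Matrix (Fin n) (Fin n) ℝ) (Matrix.isSymm_one) x
  simp only [aux_one] at this
  exact this

end aux

/-- For the FKM polynomial `F(x) = |x|⁴ - 2 Σ_i ⟨P_i x, x⟩²` of a symmetric
Clifford system `{P₀,...,P_m}` on `ℝ^{2l}`, the restriction `f = F|_{S^{2l-1}}` satisfies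
`|∇f|² = 16(1 - f²)`, where `∇f` is the spherical gradient, i.e. the tangential component
of the Euclidean gradient of `F`. -/
theorem stmt_13 (m l : ℕ) (P : Fin (m + 1) → Matrix (Fin (2 * l)) (Fin (2 * l)) ℝ)
    (hsymm : ∀ i, (P i).IsSymm)
    (hcl : ∀ i j, P i * P j + P j * P i =
      if i = j then (2 : ℝ) • (1 : Matrix (Fin (2 * l)) (Fin (2 * l)) ℝ) else 0)
    (F : EuclideanSpace ℝ (Fin (2 * l)) → ℝ)
    (hF : ∀ x, F x = ‖x‖ ^ 4 -
      2 * ∑ i, ⟪Matrix.toEuclideanLin (P i) x, x⟫ ^ 2)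
    (x : EuclideanSpace ℝ (Fin (2 * l))) (hx : ‖x‖ = 1) :
    ‖gradient F x - ⟪gradient F x, x⟫ • x‖ ^ 2 = 16 * (1 - (F x) ^ 2) := by
  have A : Fin (m + 1) → EuclideanSpace ℝ (Fin (2 * l)) →ₗ[ℝ] EuclideanSpace ℝ (Fin (2 * l)) :=
    fun i => Matrix.toEuclideanLin (P i)
  set s : Fin (m + 1) → ℝ := fun i => ⟪Matrix.toEuclideanLin (P i) x, x⟫ with hs
  have hsi : ∀ i, ⟪Matrix.toEuclideanLin (P i) x, x⟫ = s i := fun i => rfl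
  have hxx : ⟪x, x⟫ = 1 := by
    rw [real_inner_self_eq_norm_sq, hx]; norm_num
  set S : ℝ := ∑ i, s i ^ 2 with hS
  -- the gradient
  set g : EuclideanSpace ℝ (Fin (2 * l)) :=
    (4 * ⟪x, x⟫) • x
      - (2 : ℝ) • ∑ i, (4 * s i) • Matrix.toEuclideanLin (P i) x with hg
  have hgrad : gradient F x = g := by
    have hFeq : F = fun y : EuclideanSpace ℝ (Fin (2 * l)) =>
        ⟪y, y⟫ ^ 2 - 2 * ∑ i, ⟪Matrix.toEuclideanLin (P i) y, y⟫ ^ 2 := by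
      funext y
      rw [hF y, real_inner_self_eq_norm_sq]
      ring
    have h0 := (grad_sq x).hasFDerivAt
    have hi : ∀ i : Fin (m + 1), HasFDerivAt
        (fun y : EuclideanSpace ℝ (Fin (2 * l)) => ⟪Matrix.toEuclideanLin (P i) y, y⟫ ^ 2)
        (InnerProductSpace.toDual ℝ _ ((4 * s i) • Matrix.toEuclideanLin (P i) x)) x :=
      fun i => (grad_term (P i) (hsymm i) x).hasFDerivAt
    have hsum := HasFDerivAt.fun_sum (fun i (_ : i ∈ Finset.univ) => hi i)
    have hmul := hsum.const_mul (2 : ℝ)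
    have htot := h0.fun_sub hmul
    have hthis : HasFDerivAt F (InnerProductSpace.toDual ℝ _ g) x := by
      rw [hFeq, hg]
      simp only [map_sub, map_smul, map_sum]
      simpa only [map_sub, map_smul, map_sum] using htot
    rw [(hasFDerivAt_iff_hasGradientAt.mp hthis).gradient,
      LinearIsometryEquiv.symm_apply_apply]
  -- orthogonality relations
  have horth : ∀ i j, ⟪Matrix.toEuclideanLin (P i) x, Matrix.toEuclideanLin (P j) x⟫
      = if i = j then 1 else 0 := by
    intro i j
    have e1 : ⟪Matrix.toEuclideanLin (P i) x, Matrix.toEuclideanLin (P j) x⟫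
        = ⟪x, Matrix.toEuclideanLin (P i * P j) x⟫ := by
      rw [aux_inner_symm, (hsymm i).eq, aux_comp]
    have e2 : ⟪Matrix.toEuclideanLin (P i) x, Matrix.toEuclideanLin (P j) x⟫
        = ⟪x, Matrix.toEuclideanLin (P j * P i) x⟫ := by
      rw [real_inner_comm, aux_inner_symm, (hsymm j).eq, aux_comp]
    have e3 : (2 : ℝ) * ⟪Matrix.toEuclideanLin (P i) x, Matrix.toEuclideanLin (P j) x⟫
        = ⟪x, Matrix.toEuclideanLin (P i * P j + P j * P i) x⟫ := by
      rw [map_add, LinearMap.add_apply, inner_add_right, ← e1, ← e2]; ring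
    rw [hcl i j] at e3
    by_cases hij : i = j
    · rw [if_pos hij] at e3
      rw [if_pos hij]
      rw [aux_smul_one, real_inner_smul_right, hxx] at e3
      linarith
    · rw [if_neg hij] at e3
      rw [if_neg hij]
      rw [map_zero] at e3
      simp only [LinearMap.zero_apply, inner_zero_right] at e3
      linarith
  have hsx : ∀ i, ⟪x, Matrix.toEuclideanLin (P i) x⟫ = s i := by
    intro i; rw [real_inner_comm]
  -- value of F at x
  have hFx : F x = 1 - 2 * S := by
    rw [hF x, hx]
    simp only [one_pow, hsi]
    rfl
  -- the helper vector T
  set T : EuclideanSpace ℝ (Fin (2 * l)) := ∑ i, s i • Matrix.toEuclideanLin (P i) x with hT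
  have hxT : ⟪x, T⟫ = S := by
    rw [hT, inner_sum]
    simp only [real_inner_smul_right]
    rw [hS]
    exact Finset.sum_congr rfl fun i _ => by rw [hsx i]; ring
  have hTx : ⟪T, x⟫ = S := by rw [real_inner_comm]; exact hxT
  have hTT : ⟪T, T⟫ = S := by
    rw [hT, sum_inner]
    simp only [real_inner_smul_left, inner_sum, real_inner_smul_right, horth,
      mul_ite, mul_one, mul_zero, Finset.mul_sum]
    rw [hS]
    refine Finset.sum_congr rfl fun i _ => ?_
    rw [Finset.sum_ite_eq Finset.univ i (fun j => s j * s i)]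
    simp [sq]
  -- the tangential part
  have hsum8 : ∀ c : ℝ, ∑ i, (c * s i) • Matrix.toEuclideanLin (P i) x = c • T := by
    intro c
    rw [hT, Finset.smul_sum]
    exact Finset.sum_congr rfl fun i _ => by rw [smul_smul]
  have hginner : ⟪g, x⟫ = 4 - 8 * S := by
    rw [hg, hxx, inner_sub_left, real_inner_smul_left, real_inner_smul_left,
      hsum8 4, real_inner_smul_left, hTx, hxx]
    ring
  have hw : g - ⟪g, x⟫ • x = (8 * S) • x - (8 : ℝ) • T := by
    rw [hginner, hg, hxx, hsum8 4]
    rw [smul_smul]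
    have : (2 : ℝ) * 4 = 8 := by norm_num
    rw [this]
    rw [sub_right_comm, ← sub_smul]
    congr 1
    congr 1
    ring
  -- norm squared of the tangential part
  have hnorm : ‖g - ⟪g, x⟫ • x‖ ^ 2 = 64 * (S - S ^ 2) := by
    rw [← real_inner_self_eq_norm_sq, hw]
    rw [inner_sub_left, inner_sub_right, inner_sub_right]
    simp only [real_inner_smul_left, real_inner_smul_right]
    rw [hxx, hxT, hTx, hTT]
    ring
  rw [hgrad, hnorm, hFx]
  ring
end
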